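/- Let p ∈ ℝ[x₁,…,xₙ] be an irreducible polynomial whose real variety V(p) = {x ∈ ℝⁿ : p(x) = 0} is allowable. Then either p is a nonzero constant multiple of one of the linear forms x_i, x_i + x_j, or x_i − x_j (a linear form defining an allowable hyperplane), or p does not change sign on ℝⁿ, i.e., p(x)·p(y) ≥ 0 for all x, y ∈ ℝⁿ. -/

import Mathlib

/-- An allowable hyperplane in `Kⁿ` is one of `{x : x i = 0}`, `{x : x i + x j = 0}`,
`{x : x i - x j = 0}`. -/
def IsAllowableHyperplane {K : Type*} [Ring K] {n : ℕ} (H : Set (Fin n → K)) : Prop :=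
  (∃ i : Fin n, H = {x | x i = 0}) ∨
  (∃ i j : Fin n, H = {x | x i + x j = 0}) ∨
  (∃ i j : Fin n, H = {x | x i - x j = 0})

/-- A set is allowable if it is a finite union of finite (nonempty) intersections of
allowable hyperplanes. -/
def IsAllowable {K : Type*} [Ring K] {n : ℕ} (A : Set (Fin n → K)) : Prop :=
  ∃ 𝒢 : Finset (Finset (Set (Fin n → K))),
    (∀ G ∈ 𝒢, G.Nonempty ∧ ∀ H ∈ G, IsAllowableHyperplane H) ∧
    A = ⋃ G ∈ 𝒢, ⋂₀ (G : Set (Set (Fin n → K)))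

open MvPolynomial Matrix

namespace Stmt6Aux

variable {n : ℕ}

/-- Units of `MvPolynomial (Fin m) ℝ` are nonzero constants. -/
lemma unit_eq_C : ∀ {m : ℕ} (t : MvPolynomial (Fin m) ℝ), IsUnit t → ∃ c : ℝ, c ≠ 0 ∧ t = C c := by
  intro m
  induction m with
  | zero =>
    intro t ht
    refine ⟨constantCoeff t, ?_, (eq_C_of_isEmpty t)⟩
    have := ht.map (constantCoeff (σ := Fin 0) (R := ℝ))
    exact this.ne_zero
  | succ m ih =>
    intro t ht
    have h2 : IsUnit (finSuccEquiv ℝ m t) := ht.map (finSuccEquiv ℝ m)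
    obtain ⟨r, hr, hCr⟩ := Polynomial.isUnit_iff.mp h2
    obtain ⟨c, hc, rfl⟩ := ih r hr
    refine ⟨c, hc, ?_⟩
    have h3 := congrArg (finSuccEquiv ℝ m).symm hCr
    rw [AlgEquiv.symm_apply_apply] at h3
    rw [← h3]
    simpa using RingHom.congr_fun (finSuccEquiv_comp_C_eq_C (R := ℝ) m) c

lemma eval_bind₁' (x : Fin n → ℝ) (g : Fin n → MvPolynomial (Fin n) ℝ)
    (q : MvPolynomial (Fin n) ℝ) :
    eval x (bind₁ g q) = eval (fun k => eval x (g k)) q := by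
  have h := aeval_bind₁ (R := ℝ) x g q
  exact h

lemma X_dvd_sub_subst (i : Fin n) (p : MvPolynomial (Fin n) ℝ) :
    (X i : MvPolynomial (Fin n) ℝ) ∣
      p - bind₁ (fun k => if k = i then 0 else X k) p := by
  classical
  induction p using MvPolynomial.induction_on with
  | C a => simp [bind₁_C_right]
  | add p q hp hq =>
    have h := dvd_add hp hq
    convert h using 1
    rw [map_add]; ring
  | mul_X p k hp =>
    rw [_root_.map_mul, bind₁_X_right]
    by_cases hk : k = i
    · subst hk
      simp only [eq_self_iff_true, if_true, mul_zero, sub_zero, if_pos]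
      exact dvd_mul_left (X k) p
    · rw [if_neg hk]
      have : p * X k - bind₁ (fun k => if k = i then 0 else X k) p * X k
          = (p - bind₁ (fun k => if k = i then 0 else X k) p) * X k := by ring
      rw [this]
      exact hp.mul_right _

lemma X_dvd_of_vanish (i : Fin n) (p : MvPolynomial (Fin n) ℝ)
    (h : ∀ x : Fin n → ℝ, x i = 0 → eval x p = 0) : (X i : MvPolynomial (Fin n) ℝ) ∣ p := by
  classical
  have hq : bind₁ (fun k => if k = i then 0 else X k) p = 0 := by
    apply MvPolynomial.funext
    intro x
    rw [eval_bind₁', map_zero]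
    apply h
    simp
  have := X_dvd_sub_subst i p
  rwa [hq, sub_zero] at this


/-- transfer along the substitution `X i ↦ X i + s • X j` (s = ±1), for `i ≠ j`. -/
lemma linear_dvd_of_vanish_add (i j : Fin n) (hij : i ≠ j) (p : MvPolynomial (Fin n) ℝ)
    (h : ∀ x : Fin n → ℝ, x i + x j = 0 → eval x p = 0) :
    (X i + X j : MvPolynomial (Fin n) ℝ) ∣ p := by
  classical
  set g : Fin n → MvPolynomial (Fin n) ℝ := fun k => if k = i then X i - X j else X k with hg
  set ginv : Fin n → MvPolynomial (Fin n) ℝ := fun k => if k = i then X i + X j else X k with hginv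
  have key : bind₁ ginv (bind₁ g p) = p := by
    rw [bind₁_bind₁]
    have : (fun k => bind₁ ginv (g k)) = (X : Fin n → MvPolynomial (Fin n) ℝ) := by
      funext k
      by_cases hk : k = i
      · subst hk
        simp [hg, hginv, bind₁_X_right, if_neg (Ne.symm hij)]
      · simp [hg, hginv, bind₁_X_right, if_neg hk]
    rw [this, bind₁_X_left]
    rfl
  have hXi : (X i : MvPolynomial (Fin n) ℝ) ∣ bind₁ g p := by
    apply X_dvd_of_vanish
    intro x hx
    rw [eval_bind₁']
    apply h
    have h1 : eval x (g i) = x i - x j := by simp [hg]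
    have h2 : eval x (g j) = x j := by simp [hg, if_neg (Ne.symm hij)]
    rw [h1, h2, hx]
    ring
  obtain ⟨t, ht⟩ := hXi
  refine ⟨bind₁ ginv t, ?_⟩
  calc p = bind₁ ginv (bind₁ g p) := key.symm
    _ = bind₁ ginv (X i) * bind₁ ginv t := by rw [ht, _root_.map_mul]
    _ = (X i + X j) * bind₁ ginv t := by rw [bind₁_X_right]; simp [hginv]

lemma linear_dvd_of_vanish_sub (i j : Fin n) (hij : i ≠ j) (p : MvPolynomial (Fin n) ℝ)
    (h : ∀ x : Fin n → ℝ, x i - x j = 0 → eval x p = 0) :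
    (X i - X j : MvPolynomial (Fin n) ℝ) ∣ p := by
  classical
  set g : Fin n → MvPolynomial (Fin n) ℝ := fun k => if k = i then X i + X j else X k with hg
  set ginv : Fin n → MvPolynomial (Fin n) ℝ := fun k => if k = i then X i - X j else X k with hginv
  have key : bind₁ ginv (bind₁ g p) = p := by
    rw [bind₁_bind₁]
    have : (fun k => bind₁ ginv (g k)) = (X : Fin n → MvPolynomial (Fin n) ℝ) := by
      funext k
      by_cases hk : k = i
      · subst hk
        simp [hg, hginv, bind₁_X_right, if_neg (Ne.symm hij)]
      · simp [hg, hginv, bind₁_X_right, if_neg hk]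
    rw [this, bind₁_X_left]
    rfl
  have hXi : (X i : MvPolynomial (Fin n) ℝ) ∣ bind₁ g p := by
    apply X_dvd_of_vanish
    intro x hx
    rw [eval_bind₁']
    apply h
    have h1 : eval x (g i) = x i + x j := by simp [hg]
    have h2 : eval x (g j) = x j := by simp [hg, if_neg (Ne.symm hij)]
    rw [h1, h2, hx]
    ring
  obtain ⟨t, ht⟩ := hXi
  refine ⟨bind₁ ginv t, ?_⟩
  calc p = bind₁ ginv (bind₁ g p) := key.symm
    _ = bind₁ ginv (X i) * bind₁ ginv t := by rw [ht, _root_.map_mul]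
    _ = (X i - X j) * bind₁ ginv t := by rw [bind₁_X_right]; simp [hginv]

/-- If an irreducible `p` is divisible by `ℓ` with `ℓ(0) = 0`, then `p = C c * ℓ`. -/
lemma assoc_of_dvd {p ℓ : MvPolynomial (Fin n) ℝ} (hirr : Irreducible p)
    (hdvd : ℓ ∣ p) (hl0 : eval (0 : Fin n → ℝ) ℓ = 0) :
    ∃ c : ℝ, c ≠ 0 ∧ p = C c * ℓ := by
  obtain ⟨t, ht⟩ := hdvd
  rcases hirr.isUnit_or_isUnit ht with hu | hu
  · exfalso
    have := hu.map (eval (0 : Fin n → ℝ))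
    rw [hl0] at this
    exact this.ne_zero rfl
  · obtain ⟨c, hc, rfl⟩ := unit_eq_C t hu
    exact ⟨c, hc, by rw [ht]; ring⟩


def GoodVec (a : Fin n → ℝ) : Prop :=
  (∃ i : Fin n, a = Pi.single i 1) ∨ (∃ i j : Fin n, a = Pi.single i 1 + Pi.single j 1) ∨
  (∃ i j : Fin n, a = Pi.single i 1 - Pi.single j 1)

lemma left_case {p : MvPolynomial (Fin n) ℝ} (hirr : Irreducible p) {a : Fin n → ℝ}
    (ha : a ≠ 0) (hgood : GoodVec a)
    (hyp : ∀ x : Fin n → ℝ, a ⬝ᵥ x = 0 → eval x p = 0) :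
    ∃ c : ℝ, c ≠ 0 ∧
      ((∃ i, p = C c * X i) ∨ (∃ i j, p = C c * (X i + X j)) ∨
       (∃ i j, p = C c * (X i - X j))) := by
  rcases hgood with ⟨i, rfl⟩ | ⟨i, j, rfl⟩ | ⟨i, j, rfl⟩
  · have hdvd : (X i : MvPolynomial (Fin n) ℝ) ∣ p :=
      X_dvd_of_vanish i p (fun x hx => hyp x (by rw [single_dotProduct, hx, mul_zero]))
    obtain ⟨c, hc, hp⟩ := assoc_of_dvd hirr hdvd (by simp)
    exact ⟨c, hc, Or.inl ⟨i, hp⟩⟩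
  · by_cases hij : i = j
    · subst hij
      have hdvd : (X i : MvPolynomial (Fin n) ℝ) ∣ p := by
        apply X_dvd_of_vanish
        intro x hx
        apply hyp
        rw [add_dotProduct, single_dotProduct, hx]
        ring
      obtain ⟨c, hc, hp⟩ := assoc_of_dvd hirr hdvd (by simp)
      refine ⟨c / 2, div_ne_zero hc two_ne_zero, Or.inr (Or.inl ⟨i, i, ?_⟩)⟩
      rw [hp, mul_add, ← add_mul, ← C_add, add_halves]
    · have hdvd := linear_dvd_of_vanish_add i j hij p (fun x hx => hyp x (by
        rw [add_dotProduct, single_dotProduct, single_dotProduct, one_mul, one_mul]; exact hx))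
      obtain ⟨c, hc, hp⟩ := assoc_of_dvd hirr hdvd (by simp)
      exact ⟨c, hc, Or.inr (Or.inl ⟨i, j, hp⟩)⟩
  · by_cases hij : i = j
    · exact absurd (by subst hij; simp) ha
    · have hdvd := linear_dvd_of_vanish_sub i j hij p (fun x hx => hyp x (by
        rw [sub_dotProduct, single_dotProduct, single_dotProduct, one_mul, one_mul]; exact hx))
      obtain ⟨c, hc, hp⟩ := assoc_of_dvd hirr hdvd (by simp)
      exact ⟨c, hc, Or.inr (Or.inr ⟨i, j, hp⟩)⟩


/-- Dot product with a fixed vector, as a linear map. -/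
noncomputable def dlin (a : Fin n → ℝ) : (Fin n → ℝ) →ₗ[ℝ] ℝ where
  toFun x := a ⬝ᵥ x
  map_add' x y := dotProduct_add a x y
  map_smul' c x := by simp [dotProduct_smul, smul_eq_mul]

@[simp] lemma dlin_apply (a x : Fin n → ℝ) : dlin a x = a ⬝ᵥ x := rfl

open Module Submodule in
lemma codim2 {a b : Fin n → ℝ} (ha : a ≠ 0) (hb : b ∉ Submodule.span ℝ {a}) :
    ∃ W : Submodule ℝ (Fin n → ℝ), finrank ℝ W + 2 ≤ n ∧
      {x | a ⬝ᵥ x = 0 ∧ b ⬝ᵥ x = 0} ⊆ (W : Set (Fin n → ℝ)) := by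
  have hb0 : b ≠ 0 := fun h => hb (h ▸ Submodule.zero_mem _)
  have hanb : a ∉ Submodule.span ℝ ({b} : Set (Fin n → ℝ)) := by
    intro h
    rcases Submodule.mem_span_singleton.mp h with ⟨c, hc⟩
    have hc0 : c ≠ 0 := fun h0 => ha (by rw [← hc, h0, zero_smul])
    exact hb (Submodule.mem_span_singleton.mpr
      ⟨c⁻¹, by rw [← hc, smul_smul, inv_mul_cancel₀ hc0, one_smul]⟩)
  have key : ∀ e f : Fin n → ℝ, e ≠ 0 → f ∉ Submodule.span ℝ ({e} : Set (Fin n → ℝ)) →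
      ∃ u : Fin n → ℝ, e ⬝ᵥ u = 0 ∧ f ⬝ᵥ u ≠ 0 := by
    intro e f he hf
    have hee : e ⬝ᵥ e ≠ 0 := fun h => he (dotProduct_self_eq_zero.mp h)
    refine ⟨f - ((e ⬝ᵥ f) / (e ⬝ᵥ e)) • e, ?_, ?_⟩
    · rw [dotProduct_sub, dotProduct_smul, smul_eq_mul]
      field_simp
      ring
    · intro h0
      have heu : e ⬝ᵥ (f - ((e ⬝ᵥ f) / (e ⬝ᵥ e)) • e) = 0 := by
        rw [dotProduct_sub, dotProduct_smul, smul_eq_mul]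
        field_simp
        ring
      have huu : (f - ((e ⬝ᵥ f) / (e ⬝ᵥ e)) • e) ⬝ᵥ (f - ((e ⬝ᵥ f) / (e ⬝ᵥ e)) • e) = 0 := by
        rw [sub_dotProduct, smul_dotProduct, smul_eq_mul, h0, heu]
        ring
      have : f - ((e ⬝ᵥ f) / (e ⬝ᵥ e)) • e = 0 := dotProduct_self_eq_zero.mp huu
      rw [sub_eq_zero] at this
      exact hf (Submodule.mem_span_singleton.mpr ⟨(e ⬝ᵥ f) / (e ⬝ᵥ e), this.symm⟩)
  obtain ⟨u, hau, hbu⟩ := key a b ha hb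
  obtain ⟨v, hbv, hav⟩ := key b a hb0 hanb
  set F := (dlin a).prod (dlin b) with hF
  have hsurj : Function.Surjective F := by
    rintro ⟨s, t⟩
    refine ⟨(s / (a ⬝ᵥ v)) • v + (t / (b ⬝ᵥ u)) • u, ?_⟩
    have h1 : F ((s / (a ⬝ᵥ v)) • v + (t / (b ⬝ᵥ u)) • u)
        = (a ⬝ᵥ ((s / (a ⬝ᵥ v)) • v + (t / (b ⬝ᵥ u)) • u),
           b ⬝ᵥ ((s / (a ⬝ᵥ v)) • v + (t / (b ⬝ᵥ u)) • u)) := rfl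
    rw [h1, dotProduct_add, dotProduct_add, dotProduct_smul, dotProduct_smul,
      dotProduct_smul, dotProduct_smul, hau, hbv]
    simp only [smul_eq_mul, mul_zero, add_zero, zero_add]
    rw [div_mul_cancel₀ s hav, div_mul_cancel₀ t hbu]
  have hrange : LinearMap.range F = ⊤ := LinearMap.range_eq_top.mpr hsurj
  refine ⟨LinearMap.ker F, ?_, ?_⟩
  · have h1 := LinearMap.finrank_range_add_finrank_ker F
    rw [hrange, finrank_top] at h1
    have h2 : finrank ℝ (ℝ × ℝ) = 2 := by simp
    have h3 : finrank ℝ (Fin n → ℝ) = n := Module.finrank_fin_fun ℝ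
    omega
  · rintro x ⟨hx1, hx2⟩
    exact LinearMap.mem_ker.mpr (Prod.ext hx1 hx2)


lemma allowable_vec {H : Set (Fin n → ℝ)} (hH : IsAllowableHyperplane H) :
    ∃ a : Fin n → ℝ, H = {x | a ⬝ᵥ x = 0} ∧ GoodVec a := by
  rcases hH with ⟨i, rfl⟩ | ⟨i, j, rfl⟩ | ⟨i, j, rfl⟩
  · exact ⟨Pi.single i 1, by ext x; simp [single_dotProduct], Or.inl ⟨i, rfl⟩⟩
  · refine ⟨Pi.single i 1 + Pi.single j 1, ?_, Or.inr (Or.inl ⟨i, j, rfl⟩)⟩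
    ext x
    simp [add_dotProduct, single_dotProduct]
  · refine ⟨Pi.single i 1 - Pi.single j 1, ?_, Or.inr (Or.inr ⟨i, j, rfl⟩)⟩
    ext x
    simp [sub_dotProduct, single_dotProduct, sub_eq_zero]

open Module in
lemma trichotomy (G : Finset (Set (Fin n → ℝ))) (hne : G.Nonempty)
    (hG : ∀ H ∈ G, IsAllowableHyperplane H) :
    (⋂₀ (G : Set (Set (Fin n → ℝ))) = Set.univ) ∨
    (∃ a : Fin n → ℝ, a ≠ 0 ∧ GoodVec a ∧
      {x : Fin n → ℝ | a ⬝ᵥ x = 0} ⊆ ⋂₀ (G : Set (Set (Fin n → ℝ)))) ∨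
    (∃ W : Submodule ℝ (Fin n → ℝ), finrank ℝ W + 2 ≤ n ∧
      ⋂₀ (G : Set (Set (Fin n → ℝ))) ⊆ (W : Set (Fin n → ℝ))) := by
  classical
  choose A hA hAgood using fun (H : Set (Fin n → ℝ)) (hH : H ∈ G) => allowable_vec (hG H hH)
  by_cases h0 : ∀ (H) (hH : H ∈ G), A H hH = 0
  · left
    rw [Set.sInter_eq_univ]
    intro H hH
    have hH' : H ∈ G := hH
    rw [hA H hH', h0 H hH']
    ext x
    simp [zero_dotProduct]
  · push_neg at h0
    obtain ⟨H₀, h₀, ha0⟩ := h0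
    by_cases hpar : ∀ (H) (hH : H ∈ G), ∃ c : ℝ, A H hH = c • A H₀ h₀
    · right; left
      refine ⟨A H₀ h₀, ha0, hAgood _ _, ?_⟩
      intro x hx
      rw [Set.mem_sInter]
      intro H hH
      have hH' : H ∈ G := hH
      rw [hA H hH']
      obtain ⟨c, hc⟩ := hpar H hH'
      have : A H hH' ⬝ᵥ x = c * (A H₀ h₀ ⬝ᵥ x) := by rw [hc, smul_dotProduct, smul_eq_mul]
      rw [Set.mem_setOf_eq, this, hx, mul_zero]
    · push_neg at hpar
      obtain ⟨H₁, h₁, hb⟩ := hpar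
      have hbspan : A H₁ h₁ ∉ Submodule.span ℝ ({A H₀ h₀} : Set (Fin n → ℝ)) := by
        intro hmem
        obtain ⟨c, hc⟩ := Submodule.mem_span_singleton.mp hmem
        exact hb c hc.symm
      obtain ⟨W, hW, hsub⟩ := codim2 ha0 hbspan
      right; right
      refine ⟨W, hW, fun x hx => hsub ⟨?_, ?_⟩⟩
      · have := hx H₀ h₀
        rwa [hA H₀ h₀] at this
      · have := hx H₁ h₁
        rwa [hA H₁ h₁] at this


open Module MeasureTheory in
lemma sign_const (p : MvPolynomial (Fin n) ℝ) {ι : Type} [Fintype ι]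
    (W : ι → Submodule ℝ (Fin n → ℝ)) (hW : ∀ k, finrank ℝ (W k) + 2 ≤ n)
    (hzero : {x : Fin n → ℝ | eval x p = 0} ⊆ ⋃ k, (W k : Set (Fin n → ℝ))) :
    ∀ x y : Fin n → ℝ, 0 ≤ eval x p * eval y p := by
  by_contra hcon
  push_neg at hcon
  obtain ⟨x₀, y₀, hxy⟩ := hcon
  set f : (Fin n → ℝ) → ℝ := fun x => eval x p with hfdef
  have hf : Continuous f := MvPolynomial.continuous_eval p
  obtain ⟨u, v, hu, hv⟩ : ∃ u v : Fin n → ℝ, 0 < f u ∧ f v < 0 := by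
    rcases mul_neg_iff.mp hxy with ⟨h1, h2⟩ | ⟨h1, h2⟩
    · exact ⟨x₀, y₀, h1, h2⟩
    · exact ⟨y₀, x₀, h2, h1⟩
  have hfull : finrank ℝ (Fin n → ℝ) = n := Module.finrank_fin_fun ℝ
  have hproper : ∀ (k : ι) (w : Fin n → ℝ),
      (W k ⊔ Submodule.span ℝ {w} : Submodule ℝ (Fin n → ℝ)) ≠ ⊤ := by
    intro k w h
    have hs : finrank ℝ (Submodule.span ℝ ({w} : Set (Fin n → ℝ))) ≤ 1 := by
      by_cases hw : w = 0
      · subst hw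
        rw [Submodule.span_zero_singleton]
        simp
      · rw [finrank_span_singleton hw]
    have h1 : finrank ℝ (W k ⊔ Submodule.span ℝ {w} : Submodule ℝ (Fin n → ℝ))
        ≤ finrank ℝ (W k) + 1 :=
      le_trans (Submodule.finrank_add_le_finrank_add_finrank _ _) (by omega)
    rw [h, finrank_top, hfull] at h1
    have := hW k
    omega
  have hWproper : ∀ k : ι, W k ≠ ⊤ := by
    intro k h
    have h2 := hW k
    rw [h, finrank_top, hfull] at h2
    omega
  have hBad0 : volume (⋃ k, (W k : Set (Fin n → ℝ))) = 0 :=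
    measure_iUnion_null fun k => Measure.addHaar_submodule volume (W k) (hWproper k)
  have pick : ∀ (U N : Set (Fin n → ℝ)), IsOpen U → U.Nonempty → volume N = 0 →
      ∃ x, x ∈ U ∧ x ∉ N := by
    intro U N hU hUne hN
    by_contra h
    push_neg at h
    exact (hU.measure_pos volume hUne).ne' (measure_mono_null h hN)
  obtain ⟨x, hxpos, hxB⟩ := pick {w | 0 < f w} _ (isOpen_lt continuous_const hf) ⟨u, hu⟩ hBad0
  obtain ⟨y, hyneg, hyB⟩ := pick {w | f w < 0} _ (isOpen_lt hf continuous_const) ⟨v, hv⟩ hBad0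
  have hBad2 : volume ((⋃ k, ((W k ⊔ Submodule.span ℝ {x} : Submodule ℝ (Fin n → ℝ)) :
        Set (Fin n → ℝ))) ∪
      (⋃ k, ((W k ⊔ Submodule.span ℝ {y} : Submodule ℝ (Fin n → ℝ)) : Set (Fin n → ℝ)))) = 0 :=
    measure_union_null
      (measure_iUnion_null fun k => Measure.addHaar_submodule volume _ (hproper k x))
      (measure_iUnion_null fun k => Measure.addHaar_submodule volume _ (hproper k y))
  obtain ⟨z, -, hzB⟩ := pick Set.univ _ isOpen_univ Set.univ_nonempty hBad2
  rw [Set.mem_union] at hzB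
  push_neg at hzB
  have hzx : ∀ k, z ∉ (W k ⊔ Submodule.span ℝ {x} : Submodule ℝ (Fin n → ℝ)) := by
    intro k hk
    exact hzB.1 (Set.mem_iUnion.mpr ⟨k, hk⟩)
  have hzy : ∀ k, z ∉ (W k ⊔ Submodule.span ℝ {y} : Submodule ℝ (Fin n → ℝ)) := by
    intro k hk
    exact hzB.2 (Set.mem_iUnion.mpr ⟨k, hk⟩)
  have seg : ∀ w : Fin n → ℝ, w ∉ (⋃ k, (W k : Set (Fin n → ℝ))) →
      (∀ k, z ∉ (W k ⊔ Submodule.span ℝ {w} : Submodule ℝ (Fin n → ℝ))) →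
      ∀ t : ℝ, f (w + t • (z - w)) ≠ 0 := by
    intro w hw hzw t hft
    have hmem : w + t • (z - w) ∈ ⋃ k, (W k : Set (Fin n → ℝ)) := hzero hft
    obtain ⟨k, hk⟩ := Set.mem_iUnion.mp hmem
    by_cases ht : t = 0
    · subst ht
      exact hw (Set.mem_iUnion.mpr ⟨k, by simpa using hk⟩)
    · apply hzw k
      have hk' : w + t • (z - w) ∈ W k := hk
      have h1 : w + t • (z - w) ∈ (W k ⊔ Submodule.span ℝ {w} : Submodule ℝ (Fin n → ℝ)) :=
        Submodule.mem_sup_left hk'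
      have h2 : w ∈ (W k ⊔ Submodule.span ℝ {w} : Submodule ℝ (Fin n → ℝ)) :=
        Submodule.mem_sup_right (Submodule.mem_span_singleton_self w)
      have h3 : t⁻¹ • ((w + t • (z - w)) - w) + w ∈
          (W k ⊔ Submodule.span ℝ {w} : Submodule ℝ (Fin n → ℝ)) :=
        Submodule.add_mem _ (Submodule.smul_mem _ _ (Submodule.sub_mem _ h1 h2)) h2
      have h4 : t⁻¹ • ((w + t • (z - w)) - w) + w = z := by
        rw [add_sub_cancel_left, smul_smul, inv_mul_cancel₀ ht, one_smul, sub_add_cancel]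
      rwa [h4] at h3
  have ivt : ∀ w : Fin n → ℝ, (∀ t : ℝ, f (w + t • (z - w)) ≠ 0) →
      (0 < f w → 0 < f z) ∧ (f w < 0 → f z < 0) := by
    intro w hseg
    set g : ℝ → ℝ := fun t => f (w + t • (z - w)) with hg
    have hgc : Continuous g := hf.comp (continuous_const.add (continuous_id.smul continuous_const))
    have hg0 : g 0 = f w := by simp [hg]
    have hg1 : g 1 = f z := by simp [hg]
    constructor
    · intro hw0
      by_contra hz0
      push_neg at hz0
      have hz0' : f z < 0 := lt_of_le_of_ne hz0 (by simpa [hg1] using hseg 1)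
      have hmem : (0:ℝ) ∈ Set.Icc (g 1) (g 0) := by
        rw [hg0, hg1]; exact ⟨hz0'.le, hw0.le⟩
      obtain ⟨t, -, hgt⟩ :=
        intermediate_value_Icc' (by norm_num : (0:ℝ) ≤ 1) hgc.continuousOn hmem
      exact hseg t hgt
    · intro hw0
      by_contra hz0
      push_neg at hz0
      have hz0' : 0 < f z := lt_of_le_of_ne hz0 (Ne.symm (by simpa [hg1] using hseg 1))
      have hmem : (0:ℝ) ∈ Set.Icc (g 0) (g 1) := by
        rw [hg0, hg1]; exact ⟨hw0.le, hz0'.le⟩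
      obtain ⟨t, -, hgt⟩ :=
        intermediate_value_Icc (by norm_num : (0:ℝ) ≤ 1) hgc.continuousOn hmem
      exact hseg t hgt
  have hp1 := (ivt x (seg x hxB hzx)).1 hxpos
  have hp2 := (ivt y (seg y hyB hzy)).2 hyneg
  exact absurd hp1 (not_lt.mpr hp2.le)

end Stmt6Aux

/-- An irreducible real polynomial with allowable real variety is either a nonzero constant
multiple of a linear form defining an allowable hyperplane, or does not change sign on `ℝⁿ`. -/
theorem stmt6 {n : ℕ} (p : MvPolynomial (Fin n) ℝ) (hirr : Irreducible p)
    (hall : IsAllowable {x : Fin n → ℝ | MvPolynomial.eval x p = 0}) :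
    (∃ c : ℝ, c ≠ 0 ∧
      ((∃ i, p = MvPolynomial.C c * MvPolynomial.X i) ∨
       (∃ i j, p = MvPolynomial.C c * (MvPolynomial.X i + MvPolynomial.X j)) ∨
       (∃ i j, p = MvPolynomial.C c * (MvPolynomial.X i - MvPolynomial.X j)))) ∨
    (∀ x y : Fin n → ℝ, 0 ≤ MvPolynomial.eval x p * MvPolynomial.eval y p) := by
  classical
  obtain ⟨𝒢, h𝒢, hV⟩ := hall
  by_cases hcase : ∃ G ∈ 𝒢, ∃ a : Fin n → ℝ, a ≠ 0 ∧ Stmt6Aux.GoodVec a ∧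
      {x : Fin n → ℝ | a ⬝ᵥ x = 0} ⊆ ⋂₀ (G : Set (Set (Fin n → ℝ)))
  · left
    obtain ⟨G, hG, a, ha, hgood, hsub⟩ := hcase
    apply Stmt6Aux.left_case hirr ha hgood
    intro x hx
    have h1 : x ∈ ⋂₀ (G : Set (Set (Fin n → ℝ))) := hsub hx
    have h2 : x ∈ ⋃ G ∈ 𝒢, ⋂₀ (G : Set (Set (Fin n → ℝ))) := Set.mem_biUnion hG h1
    rw [← hV] at h2
    exact h2
  · have hG2 : ∀ G ∈ 𝒢, ∃ W : Submodule ℝ (Fin n → ℝ), Module.finrank ℝ W + 2 ≤ n ∧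
        ⋂₀ (G : Set (Set (Fin n → ℝ))) ⊆ (W : Set (Fin n → ℝ)) := by
      intro G hGm
      rcases Stmt6Aux.trichotomy G (h𝒢 G hGm).1 (h𝒢 G hGm).2 with huniv | hmid | hW
      · exfalso
        apply hirr.ne_zero
        apply MvPolynomial.funext (q := (0 : MvPolynomial (Fin n) ℝ))
        intro x
        rw [map_zero]
        have h2 : x ∈ ⋃ G ∈ 𝒢, ⋂₀ (G : Set (Set (Fin n → ℝ))) :=
          Set.mem_biUnion hGm (by rw [huniv]; trivial)
        rw [← hV] at h2
        exact h2
      · exact absurd ⟨G, hGm, hmid⟩ hcase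
      · exact hW
    choose W hWrank hWsub using hG2
    right
    intro x y
    refine Stmt6Aux.sign_const p (ι := {G // G ∈ 𝒢}) (fun g => W g.1 g.2)
      (fun g => hWrank g.1 g.2) ?_ x y
    intro w hw
    have h2 : w ∈ ⋃ G ∈ 𝒢, ⋂₀ (G : Set (Set (Fin n → ℝ))) := by rw [← hV]; exact hw
    obtain ⟨G, hGm, hwG⟩ := Set.mem_iUnion₂.mp h2
    exact Set.mem_iUnion.mpr ⟨⟨G, hGm⟩, hWsub G hGm hwG⟩
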